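/- Let Ω = {−1,1}^ℕ and let α>2. For every x∈Ω the series f(x) = x₁ Σ_{n=2}^∞ x_n/(n−1)^α converges absolutely; the function f:Ω→ℝ so defined is continuous and belongs to the Walters class W(Ω,σ), i.e. sup_{n≥1} sup_{w∈{−1,1}^n} |S_n(f)(wx) − S_n(f)(wy)| → 0 as d(x,y) → 0. -/
import Mathlib


open Real MeasureTheory Filter Topology Set

open scoped Classical

namespace GS

/-- The full shift space `Ω = 𝒜^ℕ`. -/
abbrev Omega (𝒜 : Type) : Type := ℕ → 𝒜

variable {𝒜 : Type}

/-- The left shift `σ(x₁,x₂,…) = (x₂,x₃,…)`. -/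
def shift (x : Omega 𝒜) : Omega 𝒜 := fun n => x (n + 1)

/-- Prepending a symbol: `qx = (q,x₁,x₂,…)`. -/
def cons (q : 𝒜) (x : Omega 𝒜) : Omega 𝒜 := fun n => Nat.casesOn n q x

/-- Concatenation `wx` of a finite word `w ∈ 𝒜^k` with `x ∈ Ω`. -/
def concat {k : ℕ} (w : Fin k → 𝒜) (x : Omega 𝒜) : Omega 𝒜 :=
  fun n => if h : n < k then w ⟨n, h⟩ else x (n - k)

/-- The metric `d(x,y) = 2^{-N(x,y)}`, `N(x,y) = inf{k ≥ 1 : x_k ≠ y_k}`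
(sequences are indexed from `0` in Lean, whence the `+ 1`). -/
noncomputable def dOmega (x y : Omega 𝒜) : ℝ :=
  if x = y then 0 else (1 / 2 : ℝ) ^ (sInf {k : ℕ | x k ≠ y k} + 1)

/-- `a : Ω → E` is `α`-Hölder (w.r.t. `dOmega`):
`Hol_α(a) = sup_{x≠y} ‖a x - a y‖ / d(x,y)^α < ∞`. -/
def IsHolderW (α : ℝ) {E : Type*} [NormedAddCommGroup E] (a : Omega 𝒜 → E) : Prop :=
  ∃ C : ℝ, ∀ x y : Omega 𝒜, ‖a x - a y‖ ≤ C * (dOmega x y) ^ α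

/-- The Hölder constant `Hol_α(a) = sup_{x≠y} ‖a x - a y‖ / d(x,y)^α`. -/
noncomputable def HolConst (α : ℝ) {E : Type*} [NormedAddCommGroup E] (a : Omega 𝒜 → E) : ℝ :=
  sSup {r : ℝ | ∃ x y : Omega 𝒜, x ≠ y ∧ r = ‖a x - a y‖ / (dOmega x y) ^ α}

/-- `J` is a `g`-function: continuous, strictly positive, with `∑_{q∈𝒜} J(qx) = 1`. -/
def IsGFunction [Fintype 𝒜] [TopologicalSpace 𝒜] (J : Omega 𝒜 → ℝ) : Prop :=
  Continuous J ∧ (∀ x, 0 < J x) ∧ ∀ x : Omega 𝒜, ∑ q : 𝒜, J (cons q x) = 1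

/-- The Ruelle transfer operator `(L_f φ)(x) = ∑_{q∈𝒜} e^{f(qx)} φ(qx)`. -/
noncomputable def ruelle [Fintype 𝒜] {E : Type*} [AddCommMonoid E] [Module ℝ E]
    (f : Omega 𝒜 → ℝ) (φ : Omega 𝒜 → E) : Omega 𝒜 → E :=
  fun x => ∑ q : 𝒜, Real.exp (f (cons q x)) • φ (cons q x)

/-- Birkhoff sum `S_k(f) = ∑_{j=0}^{k-1} f ∘ σ^j`. -/
def birkhoff (f : Omega 𝒜 → ℝ) (k : ℕ) (x : Omega 𝒜) : ℝ :=
  ∑ j ∈ Finset.range k, f (shift^[j] x)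

/-- `𝕁(wx) = exp (S_k(log J)(wx))` for a word `w` of length `k`. -/
noncomputable def JBirk (J : Omega 𝒜 → ℝ) (k : ℕ) (w : Fin k → 𝒜) (x : Omega 𝒜) : ℝ :=
  Real.exp (birkhoff (fun z => Real.log (J z)) k (concat w x))

/-- `ζ₊(s) = ∑_{k≥1} ∑_{w∈𝒜^k} a(wx) 𝕁(wx)^s`. -/
noncomputable def zetaPlus [Fintype 𝒜] (J : Omega 𝒜 → ℝ) (a : Omega 𝒜 → ℂ) (x : Omega 𝒜)
    (s : ℝ) : ℂ :=
  ∑' k : ℕ, ∑ w : Fin (k + 1) → 𝒜, a (concat w x) * (((JBirk J (k + 1) w x) ^ s : ℝ) : ℂ)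

/-- `ζ₋(s) = ∑_{k≥1} ∑_{w∈𝒜^k} a(wy) 𝕁(wx)^s`. -/
noncomputable def zetaMinus [Fintype 𝒜] (J : Omega 𝒜 → ℝ) (a : Omega 𝒜 → ℂ) (x y : Omega 𝒜)
    (s : ℝ) : ℂ :=
  ∑' k : ℕ, ∑ w : Fin (k + 1) → 𝒜, a (concat w y) * (((JBirk J (k + 1) w x) ^ s : ℝ) : ℂ)

/-- `L_{log J}^* μ = μ`, i.e. `μ` is a `g`-measure of `J`, tested against continuous functions. -/
def IsGMeasure [Fintype 𝒜] [TopologicalSpace 𝒜] [MeasurableSpace 𝒜]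
    (J : Omega 𝒜 → ℝ) (μ : Measure (Omega 𝒜)) : Prop :=
  IsProbabilityMeasure μ ∧
    ∀ φ : Omega 𝒜 → ℂ, Continuous φ →
      ∫ x, ruelle (fun z => Real.log (J z)) φ x ∂μ = ∫ x, φ x ∂μ

/-- The cylinder set determined by a finite word. -/
def cyl {k : ℕ} (w : Fin k → 𝒜) : Set (Omega 𝒜) := {x | ∀ i : Fin k, x (i : ℕ) = w i}

/-- Entropy of the partition into cylinders of length `n`. -/
noncomputable def blockEntropy [Fintype 𝒜] [MeasurableSpace 𝒜] (μ : Measure (Omega 𝒜))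
    (n : ℕ) : ℝ :=
  ∑ w : Fin n → 𝒜, Real.negMulLog (μ (cyl w)).toReal

/-- Kolmogorov–Sinai entropy `h_μ(σ)` of a shift-invariant measure, computed through the
generating partition into cylinders: `h_μ(σ) = lim_n H_n/n = inf_{n≥1} H_n/n`. -/
noncomputable def KSentropy [Fintype 𝒜] [MeasurableSpace 𝒜] (μ : Measure (Omega 𝒜)) : ℝ :=
  ⨅ n : ℕ, blockEntropy μ (n + 1) / (n + 1)

/-- Topological pressure `P(f) = sup {h_μ(σ) + ∫ f dμ}` over shift-invariant Borel
probability measures. -/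
noncomputable def pressure [Fintype 𝒜] [MeasurableSpace 𝒜] (f : Omega 𝒜 → ℝ) : ℝ :=
  sSup {r : ℝ | ∃ μ : Measure (Omega 𝒜), IsProbabilityMeasure μ ∧
    Measure.map shift μ = μ ∧ r = KSentropy μ + ∫ x, f x ∂μ}

/-- `μ` is an equilibrium state of `f`. -/
def IsEquilibrium [Fintype 𝒜] [MeasurableSpace 𝒜] (f : Omega 𝒜 → ℝ)
    (μ : Measure (Omega 𝒜)) : Prop :=
  IsProbabilityMeasure μ ∧ Measure.map shift μ = μ ∧
    KSentropy μ + ∫ x, f x ∂μ = pressure f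

/-- The Walters class `W(Ω,σ)`:
`sup_{n≥1} sup_{w∈𝒜^n} |S_n(f)(wx) − S_n(f)(wy)| → 0` as `d(x,y) → 0`. -/
def WaltersClass [TopologicalSpace 𝒜] (f : Omega 𝒜 → ℝ) : Prop :=
  Continuous f ∧ ∀ ε > (0:ℝ), ∃ δ > (0:ℝ), ∀ x y : Omega 𝒜, dOmega x y < δ →
    ∀ (n : ℕ) (w : Fin n → 𝒜),
      |birkhoff f n (concat w x) - birkhoff f n (concat w y)| ≤ ε

/-- The set `W*` of finite (nonempty) words over `𝒜`. -/
def Words (𝒜 : Type) : Type := Σ k : ℕ, Fin (k + 1) → 𝒜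

end GS
namespace GS

/-- The spin values: symbol `0` ↦ `−1`, symbol `1` ↦ `+1`. -/
noncomputable def spin (q : Fin 2) : ℝ := if q = 0 then -1 else 1

/-- The Dyson potential `f(x) = x₁ ∑_{n≥2} x_n/(n−1)^α` on `Ω = {−1,1}^ℕ`
(spins encoded by `Fin 2` through `spin`, and the series reindexed from `0`). -/
noncomputable def dyson (α : ℝ) (x : Omega (Fin 2)) : ℝ :=
  spin (x 0) * ∑' n : ℕ, spin (x (n + 1)) / ((n : ℝ) + 1) ^ α

/-! ### Auxiliary lemmas for Statement 19 -/

/-- The dominating sequence `1/(n+1)^α`. -/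
noncomputable def dc (α : ℝ) (n : ℕ) : ℝ := 1 / ((n : ℝ) + 1) ^ α

lemma dc_nonneg (α : ℝ) (n : ℕ) : 0 ≤ dc α n := by unfold dc; positivity

lemma summable_dc {α : ℝ} (hα : 1 < α) : Summable (dc α) := by
  have h := Real.summable_one_div_nat_rpow.mpr hα
  have h2 := (summable_nat_add_iff 1).mpr h
  have : (fun n : ℕ => 1 / ((↑(n + 1) : ℝ)) ^ α) = dc α := by
    funext n; unfold dc; push_cast; ring_nf
  rwa [this] at h2

lemma abs_spin (q : Fin 2) : |spin q| = 1 := by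
  unfold spin; split <;> simp

lemma abs_spin_sub (a b : Fin 2) : |spin a - spin b| ≤ 2 := by
  calc |spin a - spin b| ≤ |spin a| + |spin b| := abs_sub _ _
    _ = 2 := by rw [abs_spin, abs_spin]; norm_num

lemma abs_term_le (α : ℝ) (x : Omega (Fin 2)) (n : ℕ) :
    |spin (x (n + 1)) / ((n : ℝ) + 1) ^ α| ≤ dc α n := by
  rw [abs_div, abs_spin, abs_of_pos (show (0:ℝ) < ((n:ℝ)+1)^α by positivity)]
  exact le_of_eq rfl

lemma summable_term {α : ℝ} (hα : 1 < α) (x : Omega (Fin 2)) :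
    Summable (fun n : ℕ => spin (x (n + 1)) / ((n : ℝ) + 1) ^ α) := by
  apply Summable.of_abs
  exact Summable.of_nonneg_of_le (fun n => abs_nonneg _) (fun n => abs_term_le α x n)
    (summable_dc hα)

/-- Tail of the dominating series. -/
noncomputable def tailc (α : ℝ) (M : ℕ) : ℝ := ∑' k : ℕ, dc α (k + M)

lemma tailc_nonneg (α : ℝ) (M : ℕ) : 0 ≤ tailc α M :=
  tsum_nonneg fun k => dc_nonneg α (k + M)

lemma summable_tailc {α : ℝ} (hα : 2 < α) : Summable (tailc α) := by
  have hhalf : 1 < α / 2 := by linarith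
  have hα1 : 1 < α := by linarith
  have hd : Summable (dc (α / 2)) := summable_dc hhalf
  have hb : ∀ k M : ℕ, dc α (k + M) ≤ dc (α / 2) k * dc (α / 2) M := by
    intro k M
    unfold dc
    rw [div_mul_div_comm, one_mul,
      ← Real.mul_rpow (by positivity) (by positivity)]
    have hbase : ((k : ℝ) + 1) * ((M : ℝ) + 1) ≤ ((↑(k + M) : ℝ) + 1) ^ (2 : ℕ) := by
      push_cast
      nlinarith [Nat.cast_nonneg (α := ℝ) k, Nat.cast_nonneg (α := ℝ) M]
    have hA : ((↑(k + M) : ℝ) + 1) ^ α = (((↑(k + M) : ℝ) + 1) ^ (2 : ℕ)) ^ (α / 2) := by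
      rw [← Real.rpow_natCast ((↑(k + M) : ℝ) + 1) 2, ← Real.rpow_mul (by positivity)]
      congr 1
      ring
    rw [hA]
    apply one_div_le_one_div_of_le (by positivity)
    exact Real.rpow_le_rpow (by positivity) hbase (by linarith)
  have hS : ∀ M, tailc α M ≤ (∑' k : ℕ, dc (α / 2) k) * dc (α / 2) M := by
    intro M
    calc tailc α M ≤ ∑' k : ℕ, dc (α / 2) k * dc (α / 2) M := by
          apply Summable.tsum_le_tsum (fun k => hb k M)
          · exact (summable_nat_add_iff M).mpr (summable_dc hα1)
          · exact hd.mul_right _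
      _ = (∑' k : ℕ, dc (α / 2) k) * dc (α / 2) M := tsum_mul_right
  exact Summable.of_nonneg_of_le (tailc_nonneg α) hS (hd.mul_left _)

lemma dyson_diff_le {α : ℝ} (hα : 1 < α) (z z' : Omega (Fin 2)) (M : ℕ)
    (h0 : z 0 = z' 0) (h : ∀ k, k < M → z (k + 1) = z' (k + 1)) :
    |dyson α z - dyson α z'| ≤ 2 * tailc α M := by
  set a : ℕ → ℝ := fun k => spin (z (k + 1)) / ((k : ℝ) + 1) ^ α with ha_def
  set b : ℕ → ℝ := fun k => spin (z' (k + 1)) / ((k : ℝ) + 1) ^ α with hb_def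
  have ha : Summable a := summable_term hα z
  have hb : Summable b := summable_term hα z'
  set g : ℕ → ℝ := fun k => if k < M then (0 : ℝ) else 2 * dc α k with hg_def
  have hg : Summable g := by
    apply Summable.of_nonneg_of_le _ _ ((summable_dc hα).mul_left 2)
    · intro k; simp only [hg_def]; split
      · exact le_refl 0
      · have := dc_nonneg α k; linarith
    · intro k; simp only [hg_def]; split
      · have := dc_nonneg α k; linarith
      · exact le_refl _
  have habs : ∀ k, |a k - b k| ≤ g k := by
    intro k
    by_cases hk : k < M
    · simp [hg_def, hk, ha_def, hb_def, h k hk]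
    · simp only [hg_def, if_neg hk]
      have heq : a k - b k = (spin (z (k + 1)) - spin (z' (k + 1))) * dc α k := by
        simp only [ha_def, hb_def]; unfold dc; ring
      rw [heq, abs_mul, abs_of_nonneg (dc_nonneg α k)]
      exact mul_le_mul_of_nonneg_right (abs_spin_sub _ _) (dc_nonneg α k)
  have hsub : Summable fun k => |a k - b k| :=
    Summable.of_nonneg_of_le (fun k => abs_nonneg _) habs hg
  have key : dyson α z - dyson α z' = spin (z 0) * ∑' k, (a k - b k) := by
    rw [Summable.tsum_sub ha hb]; unfold dyson; rw [← h0]; ring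
  have hgsum : ∑' k, g k = 2 * tailc α M := by
    rw [← Summable.sum_add_tsum_nat_add M hg]
    have h1 : ∑ i ∈ Finset.range M, g i = 0 := by
      apply Finset.sum_eq_zero; intro i hi
      simp [hg_def, Finset.mem_range.mp hi]
    have h2 : ∀ i : ℕ, g (i + M) = 2 * dc α (i + M) := by
      intro i; simp [hg_def]
    rw [h1, zero_add]
    calc (∑' i : ℕ, g (i + M)) = ∑' i : ℕ, 2 * dc α (i + M) := by
          exact tsum_congr h2
      _ = 2 * tailc α M := by rw [tailc, tsum_mul_left]
  calc |dyson α z - dyson α z'| = |spin (z 0)| * |∑' k, (a k - b k)| := by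
        rw [key, abs_mul]
    _ ≤ 1 * ∑' k, |a k - b k| := by
        apply mul_le_mul (le_of_eq (abs_spin _)) _ (abs_nonneg _) zero_le_one
        simpa [Real.norm_eq_abs] using
          norm_tsum_le_tsum_norm (f := fun k => a k - b k) (by simpa [Real.norm_eq_abs] using hsub)
    _ = ∑' k, |a k - b k| := one_mul _
    _ ≤ ∑' k, g k := Summable.tsum_le_tsum habs hsub hg
    _ = 2 * tailc α M := hgsum

lemma shift_iterate {𝒜 : Type} (x : Omega 𝒜) (j m : ℕ) : (shift^[j] x) m = x (m + j) := by
  induction j generalizing x with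
  | zero => simp
  | succ j ih =>
      rw [Function.iterate_succ_apply, ih (shift x)]
      rfl

lemma birkhoff_bound {α : ℝ} (hα : 2 < α) (N n : ℕ) (w : Fin n → Fin 2)
    (x y : Omega (Fin 2)) (hxy : ∀ m, m < N → x m = y m) :
    |birkhoff (dyson α) n (concat w x) - birkhoff (dyson α) n (concat w y)| ≤
      2 * ∑' i : ℕ, tailc α (i + N) := by
  have hα1 : 1 < α := by linarith
  have hterm : ∀ j, j < n →
      |dyson α (shift^[j] (concat w x)) - dyson α (shift^[j] (concat w y))| ≤
        2 * tailc α ((n - 1 - j) + N) := by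
    intro j hj
    apply dyson_diff_le hα1
    · rw [shift_iterate, shift_iterate]
      simp [concat, hj]
    · intro k hk
      rw [shift_iterate, shift_iterate]
      simp only [concat]
      by_cases hcase : k + 1 + j < n
      · rw [dif_pos hcase, dif_pos hcase]
      · rw [dif_neg hcase, dif_neg hcase]
        exact hxy _ (by omega)
  have step1 : |birkhoff (dyson α) n (concat w x) - birkhoff (dyson α) n (concat w y)| ≤
      ∑ j ∈ Finset.range n, 2 * tailc α ((n - 1 - j) + N) := by
    unfold birkhoff
    rw [← Finset.sum_sub_distrib]
    refine (Finset.abs_sum_le_sum_abs _ _).trans ?_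
    exact Finset.sum_le_sum fun j hj => hterm j (Finset.mem_range.mp hj)
  have step2 : ∑ j ∈ Finset.range n, 2 * tailc α ((n - 1 - j) + N) =
      2 * ∑ i ∈ Finset.range n, tailc α (i + N) := by
    rw [← Finset.mul_sum]
    congr 1
    exact Finset.sum_range_reflect (fun i => tailc α (i + N)) n
  have step3 : ∑ i ∈ Finset.range n, tailc α (i + N) ≤ ∑' i : ℕ, tailc α (i + N) := by
    apply Summable.sum_le_tsum
    · intro i _; exact tailc_nonneg α (i + N)
    · exact (summable_nat_add_iff N).mpr (summable_tailc hα)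
  calc |birkhoff (dyson α) n (concat w x) - birkhoff (dyson α) n (concat w y)|
      ≤ ∑ j ∈ Finset.range n, 2 * tailc α ((n - 1 - j) + N) := step1
    _ = 2 * ∑ i ∈ Finset.range n, tailc α (i + N) := step2
    _ ≤ 2 * ∑' i : ℕ, tailc α (i + N) := by linarith [step3]

/-- the Dyson potential is in the Walters class, from [CL17].
For `α > 2`, the series defining the Dyson potential converges absolutely at every `x ∈ Ω`,
and `f` is continuous and belongs to the Walters class `W(Ω,σ)`. -/
theorem statement19 (α : ℝ) (hα : 2 < α) :
    (∀ x : Omega (Fin 2),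
      Summable (fun n : ℕ => |spin (x (n + 1)) / ((n : ℝ) + 1) ^ α|)) ∧
    Continuous (dyson α) ∧
    WaltersClass (dyson α) := by
  have hα1 : 1 < α := by linarith
  have hcont : Continuous (dyson α) := by
    unfold dyson
    apply Continuous.mul
    · exact (continuous_of_discreteTopology (f := spin)).comp (continuous_apply 0)
    · apply continuous_tsum (u := dc α)
      · intro n
        exact ((continuous_of_discreteTopology (f := spin)).comp
          (continuous_apply (n + 1))).div_const _
      · exact summable_dc hα1
      · intro n x
        rw [Real.norm_eq_abs]
        exact abs_term_le α x n
  refine ⟨?_, hcont, hcont, ?_⟩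
  · intro x
    exact Summable.of_nonneg_of_le (fun n => abs_nonneg _) (fun n => abs_term_le α x n)
      (summable_dc hα1)
  · intro ε hε
    have hT := tendsto_sum_nat_add (tailc α)
    obtain ⟨N, hN⟩ := (Metric.tendsto_atTop.mp hT (ε / 2) (by linarith))
    have hTN : (∑' i : ℕ, tailc α (i + N)) < ε / 2 := by
      have := hN N le_rfl
      rw [Real.dist_eq, sub_zero] at this
      calc (∑' i : ℕ, tailc α (i + N)) ≤ |∑' i : ℕ, tailc α (i + N)| := le_abs_self _
        _ < ε / 2 := this
    refine ⟨(1 / 2 : ℝ) ^ (N + 1), by positivity, ?_⟩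
    intro x y hd n w
    by_cases hxy : x = y
    · subst hxy
      simp only [sub_self, abs_zero]
      linarith
    · have hs : N < sInf {k : ℕ | x k ≠ y k} := by
        rw [dOmega, if_neg hxy] at hd
        have := (pow_lt_pow_iff_right_of_lt_one₀ (by norm_num : (0:ℝ) < 1/2)
          (by norm_num : (1/2:ℝ) < 1)).mp hd
        omega
      have hagree : ∀ m, m < N → x m = y m := by
        intro m hm
        by_contra hne
        have := Nat.sInf_le (show m ∈ {k : ℕ | x k ≠ y k} from hne)
        omega
      calc |birkhoff (dyson α) n (concat w x) - birkhoff (dyson α) n (concat w y)|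
          ≤ 2 * ∑' i : ℕ, tailc α (i + N) := birkhoff_bound hα N n w x y hagree
        _ ≤ ε := by linarith

end GS
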